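/- Fix an integer N ≥ 2 and let ξ ∈ (0,1)^{2N−1} ⊂ (0,∞)^{2N−1}. Define a_1 = ξ_1, a_n = ξ_{2n−2} + ξ_{2n−1} for 2 ≤ n ≤ N, and b_n = ξ_{2n−1} ξ_{2n} for 1 ≤ n ≤ N−1, and suppose all eigenvalues of the Jacobi matrix J_{a,b} lie in the open interval (0,1). Then there exist c_1,…,c_{2N−1} ∈ (0,1) such that ξ_1 = c_1 and ξ_n = (1 − c_{n−1}) c_n for all 2 ≤ n ≤ 2N−1 (Wall's theorem on chain sequences for finitely supported measures). -/

import Mathlib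

open MeasureTheory ProbabilityTheory Matrix Finset Real
open scoped ENNReal NNReal

noncomputable section

/-- The symmetric tridiagonal (Jacobi) matrix with diagonal `a` and
off-diagonal entries `√(b n)`. -/
def jacobiMatrix {N : ℕ} (a : Fin N → ℝ) (b : Fin (N - 1) → ℝ) :
    Matrix (Fin N) (Fin N) ℝ :=
  Matrix.of fun i j =>
    if i = j then a i
    else if h : (i : ℕ) + 1 = (j : ℕ) then
      Real.sqrt (b ⟨i, by have := j.isLt; omega⟩)
    else if h' : (j : ℕ) + 1 = (i : ℕ) then
      Real.sqrt (b ⟨j, by have := i.isLt; omega⟩)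
    else 0

lemma jacobiMatrix_isHermitian {N : ℕ} (a : Fin N → ℝ) (b : Fin (N - 1) → ℝ) :
    (jacobiMatrix a b).IsHermitian := by
  unfold Matrix.IsHermitian
  ext i j
  simp only [jacobiMatrix, Matrix.conjTranspose_apply, Matrix.of_apply, star_trivial]
  by_cases hij : i = j
  · subst hij; simp
  · have hji : j ≠ i := fun h => hij h.symm
    rw [if_neg hji, if_neg hij]
    by_cases h1 : (j : ℕ) + 1 = (i : ℕ)
    · have h2 : ¬((i : ℕ) + 1 = (j : ℕ)) := by omega
      rw [dif_pos h1, dif_neg h2, dif_pos h1]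
    · by_cases h2 : (i : ℕ) + 1 = (j : ℕ)
      · rw [dif_neg h1, dif_pos h2, dif_pos h2]
      · rw [dif_neg h1, dif_neg h2, dif_neg h2, dif_neg h1]

/-- Reordering of a finite tuple in decreasing order. -/
def sortDesc {N : ℕ} (v : Fin N → ℝ) : Fin N → ℝ :=
  fun i => v (Tuple.sort v (Fin.rev i))

/-- The eigenvalues of the Jacobi matrix `J_{a,b}`, in decreasing order. -/
def jacobiEigs {N : ℕ} (a : Fin N → ℝ) (b : Fin (N - 1) → ℝ) : Fin N → ℝ :=
  sortDesc (jacobiMatrix_isHermitian a b).eigenvalues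

/-- The squared first coordinates of unit eigenvectors of the Jacobi matrix `J_{a,b}`,
indexed compatibly with `jacobiEigs` (decreasing eigenvalue order):
`jacobiWeights hN a b i` is the squared first coordinate of a unit eigenvector
associated with the eigenvalue `jacobiEigs a b i`. -/
def jacobiWeights {N : ℕ} (hN : 0 < N) (a : Fin N → ℝ) (b : Fin (N - 1) → ℝ) :
    Fin N → ℝ :=
  fun i =>
    ((jacobiMatrix_isHermitian a b).eigenvectorBasis
        (Tuple.sort (jacobiMatrix_isHermitian a b).eigenvalues (Fin.rev i)) ⟨0, hN⟩) ^ 2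

/-- The spectral map: Jacobi data `(a, b)` is sent to the decreasingly ordered
eigenvalues together with the first `N - 1` spectral weights. -/
def spectralMap {N : ℕ} (hN : 0 < N) (a : Fin N → ℝ) (b : Fin (N - 1) → ℝ) :
    (Fin N → ℝ) × (Fin (N - 1) → ℝ) :=
  ⟨jacobiEigs a b, fun i => jacobiWeights hN a b ⟨i, by have := i.isLt; omega⟩⟩

/-- The Vandermonde product `∏_{i<j} (x j - x i)`. -/
def vdm {N : ℕ} (x : Fin N → ℝ) : ℝ :=
  ∏ i : Fin N, ∏ j ∈ Finset.Ioi i, (x j - x i)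

/-- The open chamber of decreasing vectors `x 0 > x 1 > … `. -/
def chamber (N : ℕ) : Set (Fin N → ℝ) := {x | ∀ i j : Fin N, i < j → x j < x i}

/-- The open simplex of positive weights with sum `< 1`. -/
def openSimplex (N : ℕ) : Set (Fin (N - 1) → ℝ) :=
  {w | (∀ i, 0 < w i) ∧ ∑ i, w i < 1}

/-- Extension of `N - 1` weights by the last weight `1 - ∑ w`. -/
def wExt {N : ℕ} (w : Fin (N - 1) → ℝ) : Fin N → ℝ :=
  fun n => if h : (n : ℕ) < N - 1 then w ⟨n, h⟩ else 1 - ∑ i, w i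

/-- The first `N` coordinates of a vector of length `2N - 1`. -/
def xPart {N : ℕ} (p : Fin (2 * N - 1) → ℝ) : Fin N → ℝ :=
  fun i => p ⟨i, by have := i.isLt; omega⟩

/-- The last `N - 1` coordinates of a vector of length `2N - 1`. -/
def wPart {N : ℕ} (p : Fin (2 * N - 1) → ℝ) : Fin (N - 1) → ℝ :=
  fun i => p ⟨N + i, by have := i.isLt; omega⟩

/-- The diagonal coefficients `a` built from the parameters `ξ`:
`a 1 = ξ 1`, `a n = ξ (2n-2) + ξ (2n-1)` (in one-based notation). -/
def xiToA {N : ℕ} (ξ : Fin (2 * N - 1) → ℝ) : Fin N → ℝ :=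
  fun n =>
    if h : (n : ℕ) = 0 then ξ ⟨0, by have := n.isLt; omega⟩
    else ξ ⟨2 * (n : ℕ) - 1, by have := n.isLt; omega⟩ +
      ξ ⟨2 * (n : ℕ), by have := n.isLt; omega⟩

/-- The off-diagonal coefficients `b` built from the parameters `ξ`:
`b n = ξ (2n-1) * ξ (2n)` (in one-based notation). -/
def xiToB {N : ℕ} (ξ : Fin (2 * N - 1) → ℝ) : Fin (N - 1) → ℝ :=
  fun n => ξ ⟨2 * (n : ℕ), by have := n.isLt; omega⟩ *
    ξ ⟨2 * (n : ℕ) + 1, by have := n.isLt; omega⟩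

/-- The chain-sequence parameters `ξ` built from canonical moments `c`:
`ξ 1 = c 1` and `ξ n = (1 - c (n-1)) * c n` (in one-based notation). -/
def cToXi {N : ℕ} (c : Fin (2 * N - 1) → ℝ) : Fin (2 * N - 1) → ℝ :=
  fun k =>
    if (k : ℕ) = 0 then c k
    else (1 - c ⟨(k : ℕ) - 1, by have := k.isLt; omega⟩) * c k

/-- The lower bidiagonal matrix `Ξ` with diagonal `√ξ 1, √ξ 3, …` and
subdiagonal `√ξ 2, √ξ 4, …` (in one-based notation). -/
def bidiag {N : ℕ} (ξ : Fin (2 * N - 1) → ℝ) : Matrix (Fin N) (Fin N) ℝ :=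
  Matrix.of fun i j =>
    if i = j then Real.sqrt (ξ ⟨2 * (i : ℕ), by have := i.isLt; omega⟩)
    else if h : (j : ℕ) + 1 = (i : ℕ) then
      Real.sqrt (ξ ⟨2 * (j : ℕ) + 1, by have := i.isLt; omega⟩)
    else 0

lemma mul_transpose_isHermitian {N : ℕ} (A : Matrix (Fin N) (Fin N) ℝ) :
    (A * Aᵀ).IsHermitian := by
  unfold Matrix.IsHermitian
  ext i j
  simp [Matrix.mul_apply, Matrix.conjTranspose_apply, Matrix.transpose_apply, mul_comm]

/-- Auxiliary: symmetric tridiagonal k×k matrix built from sequences `d` (diagonal)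
and `e` (off-diagonal). -/
def triMat (d e : ℕ → ℝ) (k : ℕ) : Matrix (Fin k) (Fin k) ℝ :=
  Matrix.of fun i j =>
    if (i : ℕ) = (j : ℕ) then d i
    else if (i : ℕ) + 1 = (j : ℕ) then e i
    else if (j : ℕ) + 1 = (i : ℕ) then e j else 0

lemma coe_succAbove' {n : ℕ} (p : Fin (n + 1)) (i : Fin n) :
    ((p.succAbove i : Fin (n + 1)) : ℕ) = if (i : ℕ) < (p : ℕ) then (i : ℕ) else (i : ℕ) + 1 := by
  rw [Fin.succAbove]
  split_ifs with h1 h2 h2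
  · rfl
  · exact absurd (by rwa [Fin.lt_def, Fin.coe_castSucc] at h1) h2
  · exact absurd (by rwa [Fin.lt_def, Fin.coe_castSucc]) h1
  · rfl

lemma triMat_det_rec (d e : ℕ → ℝ) (k : ℕ) :
    (triMat d e (k + 2)).det
      = d (k + 1) * (triMat d e (k + 1)).det - e k ^ 2 * (triMat d e k).det := by
  have hlast : ((Fin.last (k + 1) : Fin (k + 2)) : ℕ) = k + 1 := rfl
  rw [Matrix.det_succ_row (triMat d e (k + 2)) (Fin.last (k + 1))]
  set jB : Fin (k + 2) := ⟨k, by omega⟩ with hjB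
  set jL : Fin (k + 2) := Fin.last (k + 1) with hjL
  set f : Fin (k + 2) → ℝ := fun j =>
    (-1 : ℝ) ^ ((Fin.last (k + 1) : Fin (k+2)) + j : ℕ) * triMat d e (k + 2) (Fin.last (k + 1)) j *
      (((triMat d e (k + 2)).submatrix (Fin.last (k + 1)).succAbove j.succAbove).det) with hf
  have hne : jB ≠ jL := by simp [hjB, hjL, Fin.ext_iff]
  have hzero : ∀ j ∈ Finset.univ, j ∉ ({jB, jL} : Finset (Fin (k + 2))) → f j = 0 := by
    intro j _ hj
    simp only [Finset.mem_insert, Finset.mem_singleton] at hj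
    push_neg at hj
    have h1 : (j : ℕ) ≠ k := fun h => hj.1 (by simp [hjB, Fin.ext_iff, h])
    have h2 : (j : ℕ) ≠ k + 1 := fun h => hj.2 (by simp [hjL, Fin.ext_iff, h])
    have hA : triMat d e (k + 2) (Fin.last (k + 1)) j = 0 := by
      simp only [triMat, Matrix.of_apply, hlast]
      rw [if_neg (by omega), if_neg (by omega), if_neg (by omega)]
    simp [hf, hA]
  have hsum : ∑ j, f j = f jB + f jL := by
    rw [← Finset.sum_subset (Finset.subset_univ ({jB, jL} : Finset (Fin (k + 2)))) hzero]
    exact Finset.sum_pair hne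
  rw [hsum]
  have hminorL : (triMat d e (k + 2)).submatrix (Fin.last (k + 1)).succAbove
      (Fin.last (k + 1)).succAbove = triMat d e (k + 1) := by
    ext i j
    simp [triMat, Fin.succAbove_last]
  have hfL : f jL = d (k + 1) * (triMat d e (k + 1)).det := by
    have hsign : (-1 : ℝ) ^ (((Fin.last (k + 1) : Fin (k+2)) : ℕ) + ((jL : Fin (k+2)) : ℕ)) = 1 :=
      by
        rw [show ((Fin.last (k + 1) : Fin (k+2)) : ℕ) = k + 1 from rfl]
        exact Even.neg_one_pow ⟨k + 1, rfl⟩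
    have hentry : triMat d e (k + 2) (Fin.last (k + 1)) jL = d (k + 1) := by
      simp [triMat, hjL]
    rw [hf]
    simp only [hsign, hentry, hminorL, one_mul]
    rw [hjL, hminorL]
  have hcoeB : ((jB : Fin (k+2)) : ℕ) = k := rfl
  have hfB : f jB = -(e k ^ 2 * (triMat d e k).det) := by
    have hsign : (-1 : ℝ) ^ (((Fin.last (k + 1) : Fin (k+2)) : ℕ) + ((jB : Fin (k+2)) : ℕ)) = -1 :=
      by
        rw [show ((Fin.last (k + 1) : Fin (k+2)) : ℕ) = k + 1 from rfl, hcoeB]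
        exact Odd.neg_one_pow ⟨k, by omega⟩
    have hentry : triMat d e (k + 2) (Fin.last (k + 1)) jB = e k := by
      simp only [triMat, Matrix.of_apply, hlast, hcoeB]
      rw [if_neg (by omega), if_neg (by omega)]
      simp
    have hdetB : ((triMat d e (k + 2)).submatrix (Fin.last (k + 1)).succAbove
        jB.succAbove).det = e k * (triMat d e k).det := by
      set B := (triMat d e (k + 2)).submatrix (Fin.last (k + 1)).succAbove jB.succAbove with hB
      rw [Matrix.det_succ_column B (Fin.last k)]
      have hcol : ((jB.succAbove (Fin.last k) : Fin (k+2)) : ℕ) = k + 1 := by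
        rw [coe_succAbove']; simp [hcoeB]
      have hz : ∀ i ∈ Finset.univ, i ≠ Fin.last k →
          (-1 : ℝ) ^ ((i : ℕ) + ((Fin.last k : Fin (k+1)) : ℕ)) * B i (Fin.last k) *
            ((B.submatrix i.succAbove (Fin.last k).succAbove).det) = 0 := by
        intro i _ hi
        have hiv : (i : ℕ) ≠ k := fun h => hi (Fin.ext h)
        have hiv2 : (i : ℕ) < k + 1 := i.isLt
        have : B i (Fin.last k) = 0 := by
          rw [hB]
          simp only [Matrix.submatrix_apply, Fin.succAbove_last, triMat, Matrix.of_apply,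
            Fin.coe_castSucc, hcol]
          rw [if_neg (by omega), if_neg (by omega), if_neg (by omega)]
        simp [this]
      rw [Finset.sum_eq_single_of_mem (Fin.last k) (Finset.mem_univ _) hz]
      have hsign2 : (-1 : ℝ) ^ (((Fin.last k : Fin (k+1)) : ℕ) + ((Fin.last k : Fin (k+1)) : ℕ))
          = 1 := by
        rw [show ((Fin.last k : Fin (k+1)) : ℕ) = k from rfl]
        exact Even.neg_one_pow ⟨k, rfl⟩
      have hentry2 : B (Fin.last k) (Fin.last k) = e k := by
        rw [hB]
        simp only [Matrix.submatrix_apply, Fin.succAbove_last, triMat, Matrix.of_apply,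
          Fin.coe_castSucc, hcol, Fin.val_last]
        rw [if_neg (by omega)]
        simp
      have hminor2 : B.submatrix (Fin.last k).succAbove (Fin.last k).succAbove
          = triMat d e k := by
        ext i j
        rw [hB]
        simp only [Matrix.submatrix_apply, Fin.succAbove_last, triMat, Matrix.of_apply,
          Fin.coe_castSucc]
        have hc : ((jB.succAbove (Fin.castSucc j) : Fin (k+2)) : ℕ) = (j : ℕ) := by
          rw [coe_succAbove']
          simp only [Fin.coe_castSucc, hcoeB]
          rw [if_pos j.isLt]
        rw [hc]
      rw [hsign2, hentry2, hminor2, one_mul]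
    rw [hf]
    simp only [hsign, hentry, hdetB]
    ring
  rw [hfL, hfB]
  ring

lemma posDef_conj_rect {n m : Type*} [Fintype n] [Fintype m] {M : Matrix n n ℝ}
    (hM : M.PosDef) (B : Matrix n m ℝ) (hB : ∀ x : m → ℝ, x ≠ 0 → B *ᵥ x ≠ 0) :
    (Bᴴ * M * B).PosDef :=
  Matrix.posDef_iff_dotProduct_mulVec.mpr ⟨Matrix.isHermitian_conjTranspose_mul_mul B hM.1, fun x hx => by
    simpa only [Matrix.star_mulVec, Matrix.dotProduct_mulVec, Matrix.vecMul_vecMul] using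
      hM.dotProduct_mulVec_pos (hB x hx)⟩

lemma posDef_submatrix' {n m : Type*} [Fintype n] [Fintype m] [DecidableEq n] [DecidableEq m]
    {M : Matrix n n ℝ} (hM : M.PosDef) {e : m → n} (he : Function.Injective e) :
    (M.submatrix e e).PosDef := by
  set P : Matrix n m ℝ := Matrix.of (fun i j => if i = e j then 1 else 0) with hP
  have hsub : M.submatrix e e = Pᴴ * M * P := by
    ext i j
    simp only [Matrix.submatrix_apply, Matrix.mul_apply, Matrix.conjTranspose_apply, hP,
      Matrix.of_apply, star_trivial]
    simp [Finset.sum_ite_eq, ite_mul, mul_ite]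
  rw [hsub]
  refine posDef_conj_rect hM P ?_
  intro x hx
  obtain ⟨i0, hi0⟩ := Function.ne_iff.mp hx
  intro hPx
  apply hi0
  have := congrFun hPx (e i0)
  simpa [Matrix.mulVec, dotProduct, hP, he.eq_iff] using this

lemma one_sub_posDef {n : Type*} [Fintype n] [DecidableEq n] {M : Matrix n n ℝ}
    (hM : M.IsHermitian) (h : ∀ i, hM.eigenvalues i < 1) : (1 - M).PosDef := by
  set U : Matrix n n ℝ := (hM.eigenvectorUnitary : Matrix n n ℝ) with hU
  have hU1 : U * star U = 1 := Matrix.mem_unitaryGroup_iff.mp hM.eigenvectorUnitary.2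
  have hspec := hM.spectral_theorem
  have hdiag : (Matrix.diagonal (RCLike.ofReal ∘ hM.eigenvalues) : Matrix n n ℝ)
      = Matrix.diagonal hM.eigenvalues := by
    congr 1
  have key : 1 - M = U * Matrix.diagonal (fun i => 1 - hM.eigenvalues i) * star U := by
    have hM' : M = U * Matrix.diagonal hM.eigenvalues * star U :=
      hspec.trans (by rw [hdiag]; rfl)
    have h1 : (1 : Matrix n n ℝ) = U * 1 * star U := by rw [mul_one, hU1]
    calc (1 : Matrix n n ℝ) - M
        = U * 1 * star U - U * Matrix.diagonal hM.eigenvalues * star U := by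
          rw [← hM', ← h1]
      _ = U * (1 - Matrix.diagonal hM.eigenvalues) * star U := by
          rw [Matrix.mul_sub, Matrix.sub_mul, mul_one]
      _ = U * Matrix.diagonal (fun i => 1 - hM.eigenvalues i) * star U := by
          rw [← Matrix.diagonal_one, Matrix.diagonal_sub]
  rw [key]
  have hD : (Matrix.diagonal (fun i => 1 - hM.eigenvalues i)).PosDef :=
    Matrix.PosDef.diagonal (fun i => by linarith [h i])
  have hrw : U * Matrix.diagonal (fun i => 1 - hM.eigenvalues i) * star U
      = (star U)ᴴ * Matrix.diagonal (fun i => 1 - hM.eigenvalues i) * (star U) := by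
    rw [Matrix.star_eq_conjTranspose, Matrix.conjTranspose_conjTranspose]
  rw [hrw]
  refine posDef_conj_rect hD (star U) ?_
  intro x hx hzero
  apply hx
  have h2 : U *ᵥ (star U *ᵥ x) = U *ᵥ 0 := by rw [hzero]
  rwa [Matrix.mulVec_mulVec, hU1, Matrix.one_mulVec, Matrix.mulVec_zero] at h2

/-- The truncated diagonal sequence. -/
def ddF {N : ℕ} (a : Fin N → ℝ) : ℕ → ℝ :=
  fun n => if h : n < N then 1 - a ⟨n, h⟩ else 0

/-- The truncated off-diagonal sequence. -/
def eeF {N : ℕ} (b : Fin (N - 1) → ℝ) : ℕ → ℝ :=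
  fun n => if h : n < N - 1 then -(Real.sqrt (b ⟨n, h⟩)) else 0

lemma one_sub_jacobi_submatrix {N : ℕ} (a : Fin N → ℝ) (b : Fin (N - 1) → ℝ)
    {k : ℕ} (hk : k ≤ N) :
    ((1 : Matrix (Fin N) (Fin N) ℝ) - jacobiMatrix a b).submatrix
        (Fin.castLE hk) (Fin.castLE hk) = triMat (ddF a) (eeF b) k := by
  ext i j
  simp only [Matrix.submatrix_apply, Matrix.sub_apply, Matrix.one_apply, jacobiMatrix,
    triMat, Matrix.of_apply, Fin.coe_castLE, ddF, eeF]
  by_cases h1 : (i : ℕ) = (j : ℕ)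
  · have hij : Fin.castLE hk i = Fin.castLE hk j := Fin.ext (by simpa using h1)
    rw [if_pos hij, if_pos hij, if_pos h1, dif_pos (lt_of_lt_of_le i.isLt hk)]
    rfl
  · have hij : Fin.castLE hk i ≠ Fin.castLE hk j := fun h => h1 (by
      simpa [Fin.ext_iff] using h)
    rw [if_neg hij, if_neg hij, if_neg h1, zero_sub]
    by_cases h2 : (i : ℕ) + 1 = (j : ℕ)
    · rw [dif_pos h2, if_pos h2, dif_pos (show (i : ℕ) < N - 1 by
        have := j.isLt; omega)]
    · rw [dif_neg h2, if_neg h2]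
      by_cases h3 : (j : ℕ) + 1 = (i : ℕ)
      · rw [dif_pos h3, if_pos h3, dif_pos (show (j : ℕ) < N - 1 by
          have := i.isLt; omega)]
      · rw [dif_neg h3, if_neg h3, neg_zero]

/-- The chain-sequence recursion producing canonical moments from `ξ`. -/
def chainC (x : ℕ → ℝ) : ℕ → ℝ
  | 0 => x 0
  | n + 1 => x (n + 1) / (1 - chainC x n)


/-- Wall's theorem on chain sequences for finitely supported measures. -/
theorem wall_chain_sequence (N : ℕ) (hN : 2 ≤ N)
    (ξ : Fin (2 * N - 1) → ℝ) (hξ : ∀ i, ξ i ∈ Set.Ioo (0 : ℝ) 1)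
    (heig : ∀ n, (jacobiMatrix_isHermitian (xiToA ξ) (xiToB ξ)).eigenvalues n
      ∈ Set.Ioo (0 : ℝ) 1) :
    ∃ c : Fin (2 * N - 1) → ℝ, (∀ i, c i ∈ Set.Ioo (0 : ℝ) 1) ∧ ξ = cToXi c := by
  classical
  set a : Fin N → ℝ := xiToA ξ with ha
  set b : Fin (N - 1) → ℝ := xiToB ξ with hb
  set d : ℕ → ℝ := ddF a with hdd
  set e : ℕ → ℝ := eeF b with hee
  set x : ℕ → ℝ := (fun n => if h : n < 2 * N - 1 then ξ ⟨n, h⟩ else 1/2) with hxx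
  set c : ℕ → ℝ := chainC x with hcc
  -- basic facts about x
  have hxv : ∀ (n : ℕ) (hn : n < 2 * N - 1), x n = ξ ⟨n, hn⟩ := by
    intro n hn; rw [hxx]; exact dif_pos hn
  have hxio : ∀ n : ℕ, n < 2 * N - 1 → 0 < x n ∧ x n < 1 := by
    intro n hn
    rw [hxv n hn]
    exact ⟨(hξ _).1, (hξ _).2⟩
  -- chain recursion facts
  have hc0 : c 0 = x 0 := rfl
  have hcs : ∀ n : ℕ, c (n + 1) = x (n + 1) / (1 - c n) := fun n => rfl
  -- positivity of all leading principal minors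
  have hpd : ((1 : Matrix (Fin N) (Fin N) ℝ) - jacobiMatrix a b).PosDef :=
    one_sub_posDef (jacobiMatrix_isHermitian a b) (fun i => (heig i).2)
  have hinj : ∀ (k : ℕ) (hk : k ≤ N), Function.Injective (Fin.castLE hk) := by
    intro k hk i j h
    exact Fin.ext (by simpa [Fin.ext_iff] using h)
  have hpos : ∀ (k : ℕ), k ≤ N → 0 < (triMat d e k).det := by
    intro k hk
    rw [← one_sub_jacobi_submatrix a b hk]
    exact (posDef_submatrix' hpd (hinj k hk)).det_pos
  -- values of d and e
  have hd0 : d 0 = 1 - x 0 := by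
    rw [hdd, ddF, dif_pos (by omega : 0 < N), hxv 0 (by omega)]
    rfl
  have hdval : ∀ m : ℕ, m + 2 ≤ N → d (m + 1) = 1 - x (2 * m + 1) - x (2 * m + 2) := by
    intro m hm
    rw [hdd, ddF, dif_pos (by omega : m + 1 < N)]
    have hA : a ⟨m + 1, by omega⟩
        = ξ ⟨2 * (m + 1) - 1, by omega⟩ + ξ ⟨2 * (m + 1), by omega⟩ := by
      rw [ha, xiToA]
      exact dif_neg (by simp)
    rw [hA, hxv (2 * m + 1) (by omega), hxv (2 * m + 2) (by omega)]
    have e1 : (⟨2 * (m + 1) - 1, by omega⟩ : Fin (2 * N - 1)) = ⟨2 * m + 1, by omega⟩ :=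
      Fin.mk_eq_mk.mpr (by omega)
    have e2 : (⟨2 * (m + 1), by omega⟩ : Fin (2 * N - 1)) = ⟨2 * m + 2, by omega⟩ :=
      Fin.mk_eq_mk.mpr (by omega)
    rw [e1, e2]
    ring
  have heval : ∀ m : ℕ, m + 2 ≤ N → e m ^ 2 = x (2 * m) * x (2 * m + 1) := by
    intro m hm
    rw [hee, eeF, dif_pos (by omega : m < N - 1)]
    have hB : b ⟨m, by omega⟩ = ξ ⟨2 * m, by omega⟩ * ξ ⟨2 * m + 1, by omega⟩ := by
      rw [hb, xiToB]
    have hBnn : 0 ≤ b ⟨m, by omega⟩ := by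
      rw [hB]
      exact mul_nonneg (hξ _).1.le (hξ _).1.le
    rw [neg_sq, Real.sq_sqrt hBnn, hB, hxv (2 * m) (by omega), hxv (2 * m + 1) (by omega)]
  -- the main induction
  have key : ∀ m : ℕ, m + 1 ≤ N →
      (∀ j, j ≤ 2 * m → 0 < c j ∧ c j < 1) ∧
      (∀ k, k ≤ m + 1 →
        (triMat d e k).det = ∏ j ∈ Finset.range (2 * k - 1), (1 - c j)) := by
    intro m
    induction m with
    | zero =>
      intro _
      constructor
      · intro j hj
        have hj0 : j = 0 := by omega
        subst hj0
        rw [hc0]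
        exact hxio 0 (by omega)
      · intro k hk
        interval_cases k
        · simp [Matrix.det_fin_zero]
        · rw [show (2 * 1 - 1) = 1 from rfl, Finset.prod_range_one]
          rw [Matrix.det_fin_one]
          have : triMat d e 1 0 0 = d 0 := by simp [triMat]
          rw [this, hd0, hc0]
    | succ m ih =>
      intro hm
      obtain ⟨hc, hΔ⟩ := ih (by omega)
      have hq : ∀ j, j ≤ 2 * m → 0 < 1 - c j := fun j hj => by linarith [(hc j hj).2]
      have hprodpos : 0 < ∏ j ∈ Finset.range (2 * m + 1), (1 - c j) := by
        apply Finset.prod_pos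
        intro j hj
        exact hq j (by simpa using Nat.lt_succ_iff.mp (Finset.mem_range.mp hj))
      have hq2m : 0 < 1 - c (2 * m) := hq _ le_rfl
      have hx1 := hxio (2 * m + 1) (by omega)
      have hx2 := hxio (2 * m + 2) (by omega)
      have hc1pos : 0 < c (2 * m + 1) := by
        rw [hcs (2 * m)]
        exact div_pos hx1.1 hq2m
      have hx2m1 : x (2 * m + 1) = (1 - c (2 * m)) * c (2 * m + 1) := by
        rw [hcs (2 * m)]
        field_simp
      have hΔm1 : (triMat d e (m + 1)).det = ∏ j ∈ Finset.range (2 * m + 1), (1 - c j) := by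
        have h := hΔ (m + 1) le_rfl
        rwa [show 2 * (m + 1) - 1 = 2 * m + 1 from by omega] at h
      have hrec := triMat_det_rec d e m
      rw [hdval m (by omega), heval m (by omega), hΔm1] at hrec
      -- key determinant formula
      have hkey : (triMat d e (m + 2)).det
          = (∏ j ∈ Finset.range (2 * m + 1), (1 - c j))
            * ((1 - c (2 * m + 1)) - x (2 * m + 2)) := by
        rcases Nat.eq_zero_or_pos m with rfl | hm1
        · have hΔ0 : (triMat d e 0).det = 1 := Matrix.det_fin_zero
          rw [hrec, hΔ0]
          have hx0c : x 0 = c 0 := hc0.symm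
          have h1 : (2 : ℕ) * 0 = 0 := by norm_num
          rw [h1] at hx2m1 ⊢
          rw [show (0:ℕ) + 1 = 1 from rfl] at hx2m1 ⊢
          rw [Finset.prod_range_one, hx2m1, hx0c]
          ring
        · have h2m : 2 * m - 1 + 1 = 2 * m := by omega
          have hΔm : (triMat d e m).det = ∏ j ∈ Finset.range (2 * m - 1), (1 - c j) := by
            have h := hΔ m (by omega)
            rwa [show 2 * m - 1 = 2 * m - 1 from rfl] at h
          have hq2m1' : 0 < 1 - c (2 * m - 1) := hq _ (by omega)
          have hx2m : x (2 * m) = (1 - c (2 * m - 1)) * c (2 * m) := by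
            have hce : c (2 * m) = x (2 * m) / (1 - c (2 * m - 1)) := by
              conv_lhs => rw [← h2m]
              rw [hcs (2 * m - 1), h2m]
            rw [hce]
            field_simp
          have hsplit : (∏ j ∈ Finset.range (2 * m + 1), (1 - c j))
              = (∏ j ∈ Finset.range (2 * m - 1), (1 - c j))
                * (1 - c (2 * m - 1)) * (1 - c (2 * m)) := by
            rw [show 2 * m + 1 = (2 * m - 1 + 1) + 1 from by omega,
              Finset.prod_range_succ, Finset.prod_range_succ, h2m]
          rw [hrec, hΔm, hsplit, hx2m, hx2m1]
          have hc2m : c (2 * m) = 1 - (1 - c (2 * m)) := by ring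
          ring
      have hpos2 := hpos (m + 2) (by omega)
      rw [hkey] at hpos2
      have hfac : 0 < (1 - c (2 * m + 1)) - x (2 * m + 2) := by
        by_contra hcon
        push_neg at hcon
        nlinarith
      have hq2m1 : 0 < 1 - c (2 * m + 1) := by linarith [hx2.1]
      have hc1lt : c (2 * m + 1) < 1 := by linarith
      have hc2pos : 0 < c (2 * m + 2) := by
        rw [hcs (2 * m + 1)]
        exact div_pos hx2.1 hq2m1
      have hc2lt : c (2 * m + 2) < 1 := by
        rw [hcs (2 * m + 1)]
        rw [div_lt_one hq2m1]
        linarith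
      have hx2m2 : x (2 * m + 2) = (1 - c (2 * m + 1)) * c (2 * m + 2) := by
        rw [hcs (2 * m + 1)]
        field_simp
      constructor
      · intro j hj
        rcases Nat.lt_or_ge j (2 * m + 1) with h | h
        · exact hc j (by omega)
        · rcases Nat.lt_or_ge j (2 * m + 2) with h' | h'
          · have : j = 2 * m + 1 := by omega
            subst this
            exact ⟨hc1pos, hc1lt⟩
          · have : j = 2 * m + 2 := by omega
            subst this
            exact ⟨hc2pos, hc2lt⟩
      · intro k hk
        rcases Nat.lt_or_ge k (m + 2) with h | h
        · exact hΔ k (by omega)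
        · have hk2 : k = m + 2 := by omega
          subst hk2
          have hsplit2 : ∏ j ∈ Finset.range (2 * (m + 2) - 1), (1 - c j)
              = (∏ j ∈ Finset.range (2 * m + 1), (1 - c j))
                * (1 - c (2 * m + 1)) * (1 - c (2 * m + 2)) := by
            rw [show 2 * (m + 2) - 1 = (2 * m + 1 + 1) + 1 from by omega,
              Finset.prod_range_succ, Finset.prod_range_succ,
              show (2 : ℕ) * m + 1 + 1 = 2 * m + 2 from by omega]
          rw [hkey, hsplit2, hx2m2]
          ring
  -- extract the conclusion
  obtain ⟨hcall, -⟩ := key (N - 1) (by omega)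
  refine ⟨fun i => c i, ?_, ?_⟩
  · intro i
    have := hcall i (by have := i.isLt; omega)
    exact ⟨this.1, this.2⟩
  · funext i
    rw [cToXi]
    by_cases hi : (i : ℕ) = 0
    · rw [if_pos hi]
      have : i = ⟨0, by omega⟩ := Fin.ext hi
      rw [this, hc0, hxv 0 (by omega)]
    · rw [if_neg hi]
      have hilt := i.isLt
      have hqi : 0 < 1 - c ((i : ℕ) - 1) := by
        have := (hcall ((i : ℕ) - 1) (by omega)).2
        linarith
      have hci : c (i : ℕ) = x (i : ℕ) / (1 - c ((i : ℕ) - 1)) := by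
        conv_lhs => rw [show (i : ℕ) = ((i : ℕ) - 1) + 1 from by omega]
        rw [hcs ((i : ℕ) - 1)]
        rw [show ((i : ℕ) - 1) + 1 = (i : ℕ) from by omega]
      rw [hci, hxv (i : ℕ) hilt]
      rw [Fin.eta]
      field_simp
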